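/- Let n ≥ 1. If B is an n×n random real matrix whose diagonal entries B_ii for i ≠ 1 are fixed equal to 1 and whose remaining entries (all off-diagonal entries together with B_11) are independent, each distributed according to a Borel probability measure on ℝ that is atomless off 0, then P(det B = 0) = P(per B̃ = 0), where B̃ is the indicator matrix of B. -/

import Mathlib

open MeasureTheory

/-- The indicator matrix of a real matrix: entry `1` where the entry is nonzero, `0` where
the entry is `0`. -/
noncomputable def indicatorMatrix {n : ℕ} (A : Matrix (Fin n) (Fin n) ℝ) :
    Matrix (Fin n) (Fin n) ℝ :=
  Matrix.of fun i j => if A i j = 0 then 0 else 1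

namespace TypeBAux

open MvPolynomial

/-! ### Measure-theoretic lemmas -/

lemma measurable_mvpoly_eval {ι : Type*} [MeasurableSpace (ι → ℝ)]
    (h : ∀ i : ι, Measurable fun x : ι → ℝ => x i) (q : MvPolynomial ι ℝ) :
    Measurable fun x : ι → ℝ => MvPolynomial.eval x q := by
  have : (fun x : ι → ℝ => MvPolynomial.eval x q)
      = fun x => ∑ d ∈ q.support, q.coeff d * ∏ i ∈ d.support, x i ^ d i := by
    funext x; rw [MvPolynomial.eval_eq]
  rw [this]
  exact Finset.measurable_sum _ fun d _ =>
    (measurable_const.mul (Finset.measurable_prod _ fun i _ => (h i).pow_const _))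

lemma measure_root_set_zero (ν : Measure ℝ) (hν : ∀ x : ℝ, x ≠ 0 → ν {x} = 0)
    (P : Polynomial ℝ) (hP : P ≠ 0) : ν {t | t ≠ 0 ∧ P.eval t = 0} = 0 := by
  have hfin : {t | P.IsRoot t}.Finite := Polynomial.finite_setOf_isRoot hP
  have hsub : {t | t ≠ 0 ∧ P.eval t = 0} ⊆ ⋃ x ∈ {t | P.IsRoot t} \ {0}, ({x} : Set ℝ) := by
    intro t ht
    exact Set.mem_biUnion ⟨ht.2, ht.1⟩ rfl
  exact measure_mono_null hsub
    ((measure_biUnion_null_iff ((hfin.diff (t := {0})).countable)).2 fun x hx => hν x hx.2)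

lemma eventSet_measurable {ι : Type*} [Fintype ι] (q : MvPolynomial ι ℝ) :
    MeasurableSet {x : ι → ℝ | MvPolynomial.eval x q = 0 ∧ ∀ i ∈ q.vars, x i ≠ 0} := by
  have h1 : MeasurableSet {x : ι → ℝ | MvPolynomial.eval x q = 0} :=
    measurable_mvpoly_eval (fun i => measurable_pi_apply i) q (measurableSet_singleton 0)
  have h2 : MeasurableSet {x : ι → ℝ | ∀ i ∈ q.vars, x i ≠ 0} := by
    have : {x : ι → ℝ | ∀ i ∈ q.vars, x i ≠ 0} = ⋂ i ∈ (q.vars : Set ι), {x | x i ≠ 0} := by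
      ext x; simp
    rw [this]
    exact MeasurableSet.biInter (Set.to_countable _) fun i _ =>
      (measurable_pi_apply i) (measurableSet_singleton 0).compl
  exact h1.inter h2

/-- Key measure-zero lemma, `Fin m` version: under a product of probability measures that
are atomless off `0` at the variables of a nonzero polynomial `q`, the event that `q`
vanishes while all its variables are nonzero is null. -/
theorem lemM : ∀ (m : ℕ) (ν : Fin m → Measure ℝ), (∀ i, IsProbabilityMeasure (ν i)) →
    ∀ (q : MvPolynomial (Fin m) ℝ), q ≠ 0 →
    (∀ i ∈ q.vars, ∀ x : ℝ, x ≠ 0 → ν i {x} = 0) →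
    Measure.pi ν {x | MvPolynomial.eval x q = 0 ∧ ∀ i ∈ q.vars, x i ≠ 0} = 0 := by
  intro m
  induction m with
  | zero =>
    intro ν hprob q hq hν
    obtain ⟨c, rfl⟩ := MvPolynomial.C_surjective (Fin 0) q
    have hc : c ≠ 0 := fun h => hq (by rw [h, map_zero])
    have : {x : Fin 0 → ℝ | MvPolynomial.eval x (C c) = 0
        ∧ ∀ i ∈ (C c : MvPolynomial (Fin 0) ℝ).vars, x i ≠ 0} = ∅ := by
      ext x; simp [hc]
    rw [this]; exact measure_empty
  | succ m IH =>
    intro ν hprob q hq hν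
    haveI := hprob
    set q' : Polynomial (MvPolynomial (Fin m) ℝ) := MvPolynomial.finSuccEquiv ℝ m q with hq'def
    have hq' : q' ≠ 0 := by
      simp only [hq'def, ne_eq, EmbeddingLike.map_eq_zero_iff]; exact hq
    set k := q'.natDegree with hk
    set c := q'.coeff k with hc_def
    have hc : c ≠ 0 := Polynomial.leadingCoeff_ne_zero.2 hq'
    have hvars_coeff : ∀ (i : ℕ) (j : Fin m), j ∈ (q'.coeff i).vars → j.succ ∈ q.vars := by
      intro i j hj
      obtain ⟨d, hd, hjd⟩ := (MvPolynomial.mem_vars j).1 hj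
      refine (MvPolynomial.mem_vars j.succ).2
        ⟨d.cons i, MvPolynomial.mem_support_coeff_finSuccEquiv.1 hd, ?_⟩
      rw [Finsupp.mem_support_iff, Finsupp.cons_succ]
      exact Finsupp.mem_support_iff.1 hjd
    have heval : ∀ x : Fin (m+1) → ℝ,
        MvPolynomial.eval x q
          = Polynomial.eval (x 0) (Polynomial.map (MvPolynomial.eval (Fin.tail x)) q') := by
      intro x
      rw [hq'def, ← MvPolynomial.eval_eq_eval_mv_eval', Fin.cons_self_tail]
    set A := {x : Fin (m+1) → ℝ | MvPolynomial.eval x q = 0 ∧ ∀ i ∈ q.vars, x i ≠ 0} with hA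
    have hA_meas : MeasurableSet A := eventSet_measurable q
    set νt := fun j : Fin m => ν j.succ with hνt
    have MP := measurePreserving_piFinSuccAbove ν 0
    set f := MeasurableEquiv.piFinSuccAbove (fun _ : Fin (m+1) => ℝ) 0 with hf
    have hsucc : (fun j : Fin m => ν ((0 : Fin (m+1)).succAbove j)) = νt := by
      funext j; rw [Fin.zero_succAbove]
    rw [hsucc] at MP
    set B := f.symm ⁻¹' A with hB
    have hB_meas : MeasurableSet B := f.symm.measurable hA_meas
    have hmem : ∀ (t : ℝ) (w : Fin m → ℝ), ((t, w) ∈ B ↔ Fin.cons t w ∈ A) := by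
      intro t w
      have : f.symm (t, w) = Fin.cons t w := by
        simp [hf, MeasurableEquiv.piFinSuccAbove, Fin.insertNthEquiv]
      simp [hB, this]
    have hAB : Measure.pi ν A = ((ν 0).prod (Measure.pi νt)) B := by
      have : A = f ⁻¹' B := by
        rw [hB, ← Set.preimage_comp]; simp
      rw [this]
      exact MP.measure_preimage hB_meas.nullMeasurableSet
    set E₁ := {w : Fin m → ℝ | MvPolynomial.eval w c = 0 ∧ ∀ j ∈ c.vars, w j ≠ 0} with hE₁
    have hE₁_null : Measure.pi νt E₁ = 0 := by
      refine IH νt (fun j => hprob j.succ) c hc fun j hj x hx => ?_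
      exact hν j.succ (hvars_coeff k j hj) x hx
    have hE₁_prod : ((ν 0).prod (Measure.pi νt)) (Set.univ ×ˢ E₁) = 0 := by
      rw [Measure.prod_prod, hE₁_null, mul_zero]
    have htail : ∀ (t : ℝ) (w : Fin m → ℝ), Fin.cons t w ∈ A → ∀ j ∈ c.vars, w j ≠ 0 := by
      intro t w hx j hj
      have := hx.2 j.succ (hvars_coeff k j hj)
      rwa [Fin.cons_succ] at this
    by_cases hv0 : (0 : Fin (m+1)) ∈ q.vars
    · set B₂ := {p : ℝ × (Fin m → ℝ) | p.1 ≠ 0 ∧ MvPolynomial.eval p.2 c ≠ 0 ∧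
        Polynomial.eval p.1 (Polynomial.map (MvPolynomial.eval p.2) q') = 0} with hB₂
      have hincl : B ⊆ (Set.univ ×ˢ E₁) ∪ B₂ := by
        rintro ⟨t, w⟩ hp
        have hx : Fin.cons t w ∈ A := (hmem t w).1 hp
        by_cases hcw : MvPolynomial.eval w c = 0
        · exact Or.inl ⟨Set.mem_univ _, hcw, htail t w hx⟩
        · refine Or.inr ⟨?_, hcw, ?_⟩
          · have := hx.2 0 hv0; rwa [Fin.cons_zero] at this
          · have := hx.1
            rw [heval] at this
            rwa [Fin.cons_zero, Fin.tail_cons] at this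
      have hpoly_eval : ∀ (t : ℝ) (w : Fin m → ℝ),
          Polynomial.eval t (Polynomial.map (MvPolynomial.eval w) q')
            = ∑ i ∈ Finset.range (k+1), MvPolynomial.eval w (q'.coeff i) * t ^ i := by
        intro t w
        rw [Polynomial.eval_eq_sum_range' (lt_of_le_of_lt Polynomial.natDegree_map_le
          (Nat.lt_succ_self k))]
        simp [Polynomial.coeff_map]
      have hB₂_meas : MeasurableSet B₂ := by
        have h1 : MeasurableSet {p : ℝ × (Fin m → ℝ) | p.1 ≠ 0} :=
          (measurable_fst (measurableSet_singleton 0)).compl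
        have h2 : MeasurableSet {p : ℝ × (Fin m → ℝ) | MvPolynomial.eval p.2 c ≠ 0} :=
          (((measurable_mvpoly_eval (fun i => measurable_pi_apply i) c).comp measurable_snd)
            (measurableSet_singleton 0)).compl
        have h3 : MeasurableSet {p : ℝ × (Fin m → ℝ) |
            Polynomial.eval p.1 (Polynomial.map (MvPolynomial.eval p.2) q') = 0} := by
          have : {p : ℝ × (Fin m → ℝ) |
              Polynomial.eval p.1 (Polynomial.map (MvPolynomial.eval p.2) q') = 0}
              = {p : ℝ × (Fin m → ℝ) |
                (∑ i ∈ Finset.range (k+1), MvPolynomial.eval p.2 (q'.coeff i) * p.1 ^ i) = 0} := by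
            ext p; simp only [Set.mem_setOf_eq, hpoly_eval]
          rw [this]
          refine (Finset.measurable_sum _ fun i _ => ?_) (measurableSet_singleton 0)
          exact ((measurable_mvpoly_eval (fun i => measurable_pi_apply i) (q'.coeff i)).comp
            measurable_snd).mul (measurable_fst.pow_const i)
        exact (h1.inter (h2.inter h3)).congr (by ext p; simp [hB₂, and_assoc])
      have hB₂_null : ((ν 0).prod (Measure.pi νt)) B₂ = 0 := by
        have hswap : ((ν 0).prod (Measure.pi νt)) B₂
            = ((Measure.pi νt).prod (ν 0)) (Prod.swap ⁻¹' B₂) := by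
          rw [← Measure.prod_swap, Measure.map_apply measurable_swap hB₂_meas]
        rw [hswap]
        rw [Measure.measure_prod_null (measurable_swap hB₂_meas)]
        refine Filter.Eventually.of_forall fun w => ?_
        by_cases hcw : MvPolynomial.eval w c = 0
        · have : (Prod.mk w ⁻¹' (Prod.swap ⁻¹' B₂)) = ∅ := by
            ext t; simp [hB₂, hcw]
          simp [this]
        · have hsub : (Prod.mk w ⁻¹' (Prod.swap ⁻¹' B₂))
              ⊆ {t | t ≠ 0 ∧ (Polynomial.map (MvPolynomial.eval w) q').eval t = 0} := by
            intro t ht; exact ⟨ht.1, ht.2.2⟩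
          refine measure_mono_null hsub (measure_root_set_zero (ν 0) (hν 0 hv0) _ ?_)
          intro hmap
          apply hcw
          have := congrArg (fun P => Polynomial.coeff P k) hmap
          simpa [Polynomial.coeff_map] using this
      rw [hAB]
      exact le_antisymm (le_trans (measure_mono hincl)
        (le_trans (measure_union_le _ _) (by rw [hE₁_prod, hB₂_null, add_zero]))) zero_le
    · have hk0 : k = 0 := by
        by_contra hk0
        have hcne : q'.coeff k ≠ 0 := Polynomial.leadingCoeff_ne_zero.2 hq'
        obtain ⟨d, hd⟩ := (MvPolynomial.support_nonempty.2 hcne)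
        apply hv0
        refine (MvPolynomial.mem_vars 0).2
          ⟨d.cons k, MvPolynomial.mem_support_coeff_finSuccEquiv.1 hd, ?_⟩
        rw [Finsupp.mem_support_iff, Finsupp.cons_zero]
        exact hk0
      have hqC : q' = Polynomial.C c := by
        rw [hc_def, hk0]
        exact Polynomial.eq_C_of_natDegree_eq_zero (hk ▸ hk0)
      have hincl : B ⊆ Set.univ ×ˢ E₁ := by
        rintro ⟨t, w⟩ hp
        have hx : Fin.cons t w ∈ A := (hmem t w).1 hp
        refine ⟨Set.mem_univ _, ?_, htail t w hx⟩
        have := hx.1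
        rw [heval, Fin.cons_zero, Fin.tail_cons, hqC] at this
        simpa using this
      rw [hAB]
      exact le_antisymm (le_trans (measure_mono hincl) (le_of_eq hE₁_prod)) zero_le

/-- Key measure-zero lemma, general finite index version. -/
theorem lemMgen {ι : Type*} [Fintype ι] [DecidableEq ι] (ν : ι → Measure ℝ)
    [hpr : ∀ i, IsProbabilityMeasure (ν i)] (q : MvPolynomial ι ℝ) (hq : q ≠ 0)
    (hν : ∀ i ∈ q.vars, ∀ x : ℝ, x ≠ 0 → ν i {x} = 0) :
    Measure.pi ν {x | MvPolynomial.eval x q = 0 ∧ ∀ i ∈ q.vars, x i ≠ 0} = 0 := by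
  classical
  set N := Fintype.card ι with hN
  set e : ι ≃ Fin N := Fintype.equivFin ι with he
  set F := MeasurableEquiv.piCongrLeft (fun _ : ι => ℝ) e.symm with hF
  have MP := measurePreserving_piCongrLeft ν e.symm
  set qF := MvPolynomial.rename e q with hqF
  have hqF0 : qF ≠ 0 := fun h =>
    hq (MvPolynomial.rename_injective e e.injective (by simpa using h))
  set A := {x : ι → ℝ | MvPolynomial.eval x q = 0 ∧ ∀ i ∈ q.vars, x i ≠ 0} with hA
  have hA_meas : MeasurableSet A := eventSet_measurable q
  have h1 : Measure.pi ν A = Measure.pi (fun k => ν (e.symm k)) (F ⁻¹' A) :=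
    (MP.measure_preimage hA_meas.nullMeasurableSet).symm
  rw [h1]
  have hFz : ∀ (z : Fin N → ℝ) (i : ι), F z i = z (e i) := by
    intro z i
    show (Equiv.piCongrLeft (fun _ : ι => ℝ) e.symm) z i = z (e i)
    conv_lhs => rw [show i = e.symm (e i) from (e.symm_apply_apply i).symm]
    rw [Equiv.piCongrLeft_apply_apply]
  refine measure_mono_null ?_ (lemM N (fun k => ν (e.symm k)) (fun k => hpr _) qF hqF0 ?_)
  · intro z hz
    have hz1 : MvPolynomial.eval (F z) q = 0 := hz.1
    constructor
    · rw [MvPolynomial.eval_rename]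
      rw [show (z ∘ e) = F z from funext fun i => (hFz z i).symm]
      exact hz1
    · intro kk hkk
      obtain ⟨i, hi, rfl⟩ := Finset.mem_image.1 (MvPolynomial.vars_rename e q hkk)
      have := hz.2 i hi
      rwa [hFz] at this
  · intro kk hkk x hx
    obtain ⟨i, hi, rfl⟩ := Finset.mem_image.1 (MvPolynomial.vars_rename e q hkk)
    show ν (e.symm (e i)) {x} = 0
    rw [e.symm_apply_apply]
    exact hν i hi x hx

/-- Uncurrying is measure preserving between the nested product and the product over pairs. -/
theorem mp_uncurry (n : ℕ) (μ : Fin n → Fin n → Measure ℝ)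
    [∀ i j, IsProbabilityMeasure (μ i j)] :
    MeasurePreserving (fun (x : Fin n → Fin n → ℝ) (p : Fin n × Fin n) => x p.1 p.2)
      (Measure.pi fun i => Measure.pi fun j => μ i j)
      (Measure.pi fun p : Fin n × Fin n => μ p.1 p.2) := by
  have hmeas : Measurable (fun (x : Fin n → Fin n → ℝ) (p : Fin n × Fin n) => x p.1 p.2) :=
    measurable_pi_lambda _ fun p => (measurable_pi_apply p.2).comp (measurable_pi_apply p.1)
  haveI : ∀ p : Fin n × Fin n, SigmaFinite (μ p.1 p.2) := fun p => inferInstance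
  refine ⟨hmeas, ?_⟩
  refine (Measure.pi_eq (μ := fun p : Fin n × Fin n => μ p.1 p.2)
    (μ' := Measure.map (fun (x : Fin n → Fin n → ℝ) (p : Fin n × Fin n) => x p.1 p.2)
      (Measure.pi fun i => Measure.pi fun j => μ i j)) fun s hs => ?_).symm
  rw [Measure.map_apply hmeas (MeasurableSet.univ_pi hs)]
  have hpre : (fun (x : Fin n → Fin n → ℝ) (p : Fin n × Fin n) => x p.1 p.2) ⁻¹'
      (Set.pi Set.univ s)
      = Set.pi Set.univ (fun i => Set.pi Set.univ fun j => s (i, j)) := by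
    ext x
    simp only [Set.mem_preimage, Set.mem_pi]
    constructor
    · intro h i _ j _; exact h ⟨i, j⟩ (Set.mem_univ _)
    · intro h p _; exact h p.1 (Set.mem_univ _) p.2 (Set.mem_univ _)
  rw [hpre, Measure.pi_pi]
  simp_rw [Measure.pi_pi]
  exact (Fintype.prod_prod_type fun p : Fin n × Fin n => μ p.1 p.2 (s p)).symm

/-! ### The determinant polynomial -/

variable {n : ℕ}

noncomputable def Pmat (n : ℕ) (z : Fin n) :
    Matrix (Fin n) (Fin n) (MvPolynomial (Fin n × Fin n) ℝ) :=
  Matrix.of fun i j => if i = j ∧ i ≠ z then 1 else X (i, j)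

noncomputable def Pdet (n : ℕ) (z : Fin n) : MvPolynomial (Fin n × Fin n) ℝ := (Pmat n z).det

def Fcols (z : Fin n) (σ : Equiv.Perm (Fin n)) : Finset (Fin n) :=
  Finset.univ.filter fun i => ¬(σ i = i ∧ i ≠ z)

noncomputable def dmon (z : Fin n) (σ : Equiv.Perm (Fin n)) : (Fin n × Fin n) →₀ ℕ :=
  ∑ i ∈ Fcols z σ, Finsupp.single (σ i, i) 1

lemma dmon_apply (z : Fin n) (σ : Equiv.Perm (Fin n)) (r i : Fin n) :
    dmon z σ (r, i) = if i ∈ Fcols z σ ∧ σ i = r then 1 else 0 := by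
  rw [dmon, Finset.sum_apply']
  by_cases hi : i ∈ Fcols z σ
  · rw [Finset.sum_eq_single_of_mem i hi (fun j _ hj => by
      rw [Finsupp.single_apply, if_neg (fun h => hj (Prod.ext_iff.1 h).2)])]
    by_cases hr : σ i = r
    · simp [Finsupp.single_apply, hr, hi]
    · rw [Finsupp.single_apply, if_neg (by simp [Prod.ext_iff, hr]), if_neg (by simp [hr])]
  · rw [Finset.sum_eq_zero fun j hj => by
      rw [Finsupp.single_apply,
        if_neg (by intro h; exact hi ((show j = i from congrArg Prod.snd h) ▸ hj))],
      if_neg (by simp [hi])]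

lemma mem_Fcols {z : Fin n} {σ : Equiv.Perm (Fin n)} {i : Fin n} :
    i ∈ Fcols z σ ↔ ¬(σ i = i ∧ i ≠ z) := by simp [Fcols]

lemma dmon_inj {z : Fin n} {σ τ : Equiv.Perm (Fin n)} (h : dmon z σ = dmon z τ) : σ = τ := by
  have key : ∀ ρ ρ' : Equiv.Perm (Fin n), dmon z ρ = dmon z ρ' →
      ∀ i, i ∈ Fcols z ρ → ρ' i = ρ i := by
    intro ρ ρ' hd i hi
    have h1 : dmon z ρ (ρ i, i) = 1 := by rw [dmon_apply, if_pos ⟨hi, rfl⟩]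
    rw [hd, dmon_apply] at h1
    by_contra hne
    rw [if_neg (fun hc => hne hc.2)] at h1
    exact zero_ne_one h1
  apply Equiv.ext
  intro i
  by_cases hσ : i ∈ Fcols z σ
  · exact (key σ τ h i hσ).symm
  by_cases hτ : i ∈ Fcols z τ
  · exact key τ σ h.symm i hτ
  · have h1 : σ i = i ∧ i ≠ z := not_not.1 fun hc => hσ (mem_Fcols.2 hc)
    have h2 : τ i = i ∧ i ≠ z := not_not.1 fun hc => hτ (mem_Fcols.2 hc)
    rw [h1.1, h2.1]

lemma dmon_support {z : Fin n} {σ : Equiv.Perm (Fin n)} {p : Fin n × Fin n} :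
    p ∈ (dmon z σ).support ↔ p.2 ∈ Fcols z σ ∧ σ p.2 = p.1 := by
  rw [Finsupp.mem_support_iff, ← Prod.mk.eta (p := p), dmon_apply]
  by_cases h : p.2 ∈ Fcols z σ ∧ σ p.2 = p.1
  · simp [h]
  · simp [h]

lemma prod_X_eq_monomial {α β : Type*} [DecidableEq β] (T : Finset α) (g : α → β) :
    (∏ i ∈ T, (X (g i) : MvPolynomial β ℝ)) = monomial (∑ i ∈ T, Finsupp.single (g i) 1) 1 := by
  classical
  induction T using Finset.induction_on with
  | empty => simp [monomial_zero', C_1]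
  | insert a s h ih =>
    rw [Finset.prod_insert h, Finset.sum_insert h, ih, X, monomial_mul, one_mul]

lemma prod_row (z : Fin n) (σ : Equiv.Perm (Fin n)) :
    (∏ i, Pmat n z (σ i) i) = monomial (dmon z σ) 1 := by
  classical
  rw [← Finset.prod_filter_mul_prod_filter_not Finset.univ (fun i => ¬(σ i = i ∧ i ≠ z))]
  have h2 : (∏ i ∈ Finset.univ.filter (fun i => ¬¬(σ i = i ∧ i ≠ z)), Pmat n z (σ i) i) = 1 := by
    refine Finset.prod_eq_one fun i hi => ?_
    rw [Finset.mem_filter, not_not] at hi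
    have := hi.2
    show (if σ i = i ∧ σ i ≠ z then 1 else X (σ i, i)) = 1
    rw [if_pos ⟨this.1, by rw [this.1]; exact this.2⟩]
  have h1 : (∏ i ∈ Finset.univ.filter (fun i => ¬(σ i = i ∧ i ≠ z)), Pmat n z (σ i) i)
      = ∏ i ∈ Fcols z σ, (X (σ i, i) : MvPolynomial (Fin n × Fin n) ℝ) := by
    refine Finset.prod_congr rfl fun i hi => ?_
    rw [mem_Fcols] at hi
    show (if σ i = i ∧ σ i ≠ z then 1 else X (σ i, i)) = X (σ i, i)
    rw [if_neg (fun hc => hi ⟨hc.1, by rw [← hc.1]; exact hc.2⟩)]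
  rw [h1, h2, mul_one, prod_X_eq_monomial, dmon]

lemma Pdet_eq (z : Fin n) :
    Pdet n z = ∑ σ : Equiv.Perm (Fin n), Equiv.Perm.sign σ • monomial (dmon z σ) (1 : ℝ) := by
  rw [Pdet, Matrix.det_apply]
  exact Finset.sum_congr rfl fun σ _ => by rw [prod_row]

noncomputable def gsub (S : Finset (Fin n × Fin n)) (p : Fin n × Fin n) :
    MvPolynomial (Fin n × Fin n) ℝ := if p ∈ S then 0 else X p

lemma bind_gsub_monomial (S : Finset (Fin n × Fin n)) (d : (Fin n × Fin n) →₀ ℕ) :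
    bind₁ (gsub S) (monomial d (1:ℝ))
      = if ∀ p ∈ d.support, p ∉ S then monomial d 1 else 0 := by
  rw [bind₁_monomial]
  by_cases h : ∀ p ∈ d.support, p ∉ S
  · rw [if_pos h, monomial_eq]
    congr 1
    refine Finset.prod_congr rfl fun p hp => ?_
    rw [gsub, if_neg (h p hp)]
  · rw [if_neg h]
    push_neg at h
    obtain ⟨p, hp, hpS⟩ := h
    rw [Finset.prod_eq_zero hp (by
      rw [gsub, if_pos hpS, zero_pow (Finsupp.mem_support_iff.1 hp)]), mul_zero]

noncomputable def PS (z : Fin n) (S : Finset (Fin n × Fin n)) : MvPolynomial (Fin n × Fin n) ℝ :=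
  bind₁ (gsub S) (Pdet n z)

lemma PS_eq (z : Fin n) (S : Finset (Fin n × Fin n)) :
    PS z S = ∑ σ : Equiv.Perm (Fin n), Equiv.Perm.sign σ •
      (if ∀ p ∈ (dmon z σ).support, p ∉ S then monomial (dmon z σ) (1:ℝ) else 0) := by
  rw [PS, Pdet_eq, map_sum]
  exact Finset.sum_congr rfl fun σ _ => by
    simp only [Units.smul_def]; rw [map_zsmul, bind_gsub_monomial]

lemma PS_coeff (z : Fin n) (S : Finset (Fin n × Fin n)) (σ₀ : Equiv.Perm (Fin n))
    (hd : ∀ p ∈ (dmon z σ₀).support, p ∉ S) :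
    coeff (dmon z σ₀) (PS z S) = Equiv.Perm.sign σ₀ • (1:ℝ) := by
  rw [PS_eq, coeff_sum]
  rw [Finset.sum_eq_single_of_mem σ₀ (Finset.mem_univ _)]
  · rw [coeff_smul, if_pos hd, coeff_monomial, if_pos rfl]
  · intro σ _ hσ
    rw [coeff_smul]
    by_cases hs : ∀ p ∈ (dmon z σ).support, p ∉ S
    · rw [if_pos hs, coeff_monomial, if_neg (fun hc => hσ (dmon_inj hc)), smul_zero]
    · rw [if_neg hs, coeff_zero, smul_zero]

lemma PS_ne_zero (z : Fin n) (S : Finset (Fin n × Fin n)) (σ₀ : Equiv.Perm (Fin n))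
    (hd : ∀ p ∈ (dmon z σ₀).support, p ∉ S) : PS z S ≠ 0 := by
  intro h
  have := PS_coeff z S σ₀ hd
  rw [h, coeff_zero] at this
  have h1 : ((Equiv.Perm.sign σ₀ : ℤ) : ℝ) = 0 := by
    rw [Units.smul_def] at this
    simpa using this.symm
  rcases Int.units_eq_one_or (Equiv.Perm.sign σ₀) with h2 | h2 <;> rw [h2] at h1 <;> simp at h1

lemma PS_vars (z : Fin n) (S : Finset (Fin n × Fin n)) (p : Fin n × Fin n)
    (hp : p ∈ (PS z S).vars) : (¬(p.1 = p.2 ∧ p.1 ≠ z)) ∧ p ∉ S := by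
  classical
  rw [PS_eq] at hp
  have := MvPolynomial.vars_sum_subset
    (t := (Finset.univ : Finset (Equiv.Perm (Fin n))))
    (φ := fun σ => Equiv.Perm.sign σ •
      (if ∀ q ∈ (dmon z σ).support, q ∉ S then monomial (dmon z σ) (1:ℝ) else 0)) hp
  rw [Finset.mem_biUnion] at this
  obtain ⟨σ, -, hσ⟩ := this
  by_cases hs : ∀ q ∈ (dmon z σ).support, q ∉ S
  · simp only [if_pos hs, smul_monomial] at hσ
    have hne : (Equiv.Perm.sign σ • (1:ℝ)) ≠ 0 := by
      rw [Units.smul_def]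
      rcases Int.units_eq_one_or (Equiv.Perm.sign σ) with h2 | h2 <;> rw [h2] <;> simp
    rw [vars_monomial hne] at hσ
    refine ⟨?_, hs p hσ⟩
    rw [dmon_support] at hσ
    rintro ⟨hpp, hpz⟩
    have h1 := mem_Fcols.1 hσ.1
    have h2 := hσ.2
    rw [hpp] at h2
    exact h1 ⟨h2, fun hz => hpz (hpp.trans hz)⟩
  · simp only [if_neg hs, smul_zero, vars_0] at hσ
    exact absurd hσ (Finset.notMem_empty p)

lemma eval_Pdet (z : Fin n) (x : Fin n → Fin n → ℝ) (hG : ∀ i, i ≠ z → x i i = 1) :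
    MvPolynomial.eval (fun p : Fin n × Fin n => x p.1 p.2) (Pdet n z) = (Matrix.of x).det := by
  rw [Pdet, RingHom.map_det]
  congr 1
  ext i j
  show MvPolynomial.eval _ (if i = j ∧ i ≠ z then 1 else X (i, j)) = x i j
  by_cases h : i = j ∧ i ≠ z
  · rw [if_pos h, map_one, ← h.1, hG i h.2]
  · rw [if_neg h, eval_X]

lemma eval_PS (z : Fin n) (S : Finset (Fin n × Fin n)) (w : Fin n × Fin n → ℝ)
    (hS : ∀ p ∈ S, w p = 0) :
    MvPolynomial.eval w (PS z S) = MvPolynomial.eval w (Pdet n z) := by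
  have : MvPolynomial.eval w (PS z S)
      = MvPolynomial.eval (fun p => MvPolynomial.eval w (gsub S p)) (Pdet n z) := by
    rw [PS]
    rw [show (MvPolynomial.eval w : MvPolynomial (Fin n × Fin n) ℝ →+* ℝ)
      = eval₂Hom (RingHom.id ℝ) w from rfl]
    rw [eval₂Hom_bind₁]
    rfl
  rw [this]
  have hw : (fun p => MvPolynomial.eval w (gsub S p)) = w := by
    funext p
    rw [gsub]
    by_cases hp : p ∈ S
    · rw [if_pos hp, map_zero, (hS p hp).symm]
    · rw [if_neg hp, eval_X]
  rw [hw]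

lemma per_eq_zero_iff (x : Fin n → Fin n → ℝ) :
    (indicatorMatrix (Matrix.of x)).permanent = 0
      ↔ ∀ σ : Equiv.Perm (Fin n), ∃ i, x (σ i) i = 0 := by
  have hent : ∀ (r i : Fin n), indicatorMatrix (Matrix.of x) r i = if x r i = 0 then 0 else 1 :=
    fun r i => rfl
  rw [Matrix.permanent, Finset.sum_eq_zero_iff_of_nonneg (fun σ _ =>
    Finset.prod_nonneg fun i _ => by rw [hent]; split <;> norm_num)]
  constructor
  · intro h σ
    have := h σ (Finset.mem_univ σ)
    obtain ⟨i, -, hi⟩ := Finset.prod_eq_zero_iff.1 this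
    rw [hent] at hi
    by_cases hx : x (σ i) i = 0
    · exact ⟨i, hx⟩
    · rw [if_neg hx] at hi; exact absurd hi one_ne_zero
  · intro h σ _
    obtain ⟨i, hi⟩ := h σ
    exact Finset.prod_eq_zero (Finset.mem_univ i) (by rw [hent, if_pos hi])

lemma det_eq_zero_of (x : Fin n → Fin n → ℝ)
    (h : ∀ σ : Equiv.Perm (Fin n), ∃ i, x (σ i) i = 0) :
    (Matrix.of x).det = 0 := by
  rw [Matrix.det_apply]
  refine Finset.sum_eq_zero fun σ _ => ?_
  obtain ⟨i, hi⟩ := h σ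
  rw [Finset.prod_eq_zero (Finset.mem_univ i) (by simpa using hi), smul_zero]

lemma G_compl_null (n : ℕ) (z : Fin n) (μ : Fin n → Fin n → Measure ℝ)
    [∀ i j, IsProbabilityMeasure (μ i j)] (hfixed : ∀ i, i ≠ z → μ i i = Measure.dirac 1) :
    Measure.pi (fun i => Measure.pi fun j => μ i j)
      {x : Fin n → Fin n → ℝ | ¬ ∀ i, i ≠ z → x i i = 1} = 0 := by
  have hsub : {x : Fin n → Fin n → ℝ | ¬ ∀ i, i ≠ z → x i i = 1}
      ⊆ ⋃ i : Fin n, {x : Fin n → Fin n → ℝ | i ≠ z ∧ x i i ≠ 1} := by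
    intro x hx
    rw [Set.mem_setOf_eq] at hx
    push_neg at hx
    obtain ⟨i, hiz, hi⟩ := hx
    exact Set.mem_iUnion.2 ⟨i, hiz, hi⟩
  refine measure_mono_null hsub (measure_iUnion_null fun i => ?_)
  by_cases hiz : i ≠ z
  · have h1 : {x : Fin n → Fin n → ℝ | i ≠ z ∧ x i i ≠ 1}
        = Function.eval i ⁻¹' {y : Fin n → ℝ | y i ≠ 1} := by
      ext x; simp [hiz, Function.eval]
    rw [h1]
    refine Measure.pi_eval_preimage_null _ ?_
    have h2 : {y : Fin n → ℝ | y i ≠ 1} = Function.eval i ⁻¹' ({1}ᶜ : Set ℝ) := by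
      ext y; simp [Function.eval]
    rw [h2]
    refine Measure.pi_eval_preimage_null _ ?_
    rw [hfixed i hiz, Measure.dirac_apply' _ (measurableSet_singleton 1).compl]
    simp
  · have : {x : Fin n → Fin n → ℝ | i ≠ z ∧ x i i ≠ 1} = ∅ := by
      ext x; simp only [Set.mem_setOf_eq, Set.mem_empty_iff_false, iff_false]
      rintro ⟨h, -⟩; exact h (not_not.1 hiz)
    rw [this]; exact measure_empty

end TypeBAux

open TypeBAux

/-- For a random `n × n` real matrix of type `B_n` — the diagonal entries
`B i i` for `i ≠ 1` are (almost surely) fixed equal to `1`, and the variable entries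
(all off-diagonal entries together with `B 1 1`) are independent with laws that are
atomless off `0` — we have `P(det B = 0) = P(per B̃ = 0)`, where `B̃` is the indicator
matrix of `B`. -/
theorem typeB_prob_det_zero_eq_prob_permanent_indicator_zero
    (n : ℕ) (hn : 1 ≤ n)
    (μ : Fin n → Fin n → Measure ℝ)
    [∀ i j, IsProbabilityMeasure (μ i j)]
    (hfixed : ∀ i : Fin n, i ≠ ⟨0, hn⟩ → μ i i = Measure.dirac 1)
    (hatomless : ∀ i j : Fin n, (i ≠ j ∨ (i = ⟨0, hn⟩ ∧ j = ⟨0, hn⟩)) →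
      ∀ x : ℝ, x ≠ 0 → μ i j {x} = 0) :
    Measure.pi (fun i => Measure.pi (fun j => μ i j))
        {B : Fin n → Fin n → ℝ | (Matrix.of B).det = 0}
      = Measure.pi (fun i => Measure.pi (fun j => μ i j))
        {B : Fin n → Fin n → ℝ | (indicatorMatrix (Matrix.of B)).permanent = 0} := by
  classical
  set z : Fin n := ⟨0, hn⟩ with hz
  set M := Measure.pi (fun i => Measure.pi (fun j => μ i j)) with hM
  set G := {x : Fin n → Fin n → ℝ | ∀ i, i ≠ z → x i i = 1} with hG
  have hGc : M Gᶜ = 0 := by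
    have : Gᶜ = {x : Fin n → Fin n → ℝ | ¬ ∀ i, i ≠ z → x i i = 1} := by
      ext x; simp [hG]
    rw [this]
    exact G_compl_null n z μ hfixed
  set D := {B : Fin n → Fin n → ℝ | (Matrix.of B).det = 0} with hD
  set Pz := {B : Fin n → Fin n → ℝ | (indicatorMatrix (Matrix.of B)).permanent = 0} with hPz
  have hPD : Pz ⊆ D := fun x hx => det_eq_zero_of x ((per_eq_zero_iff x).1 hx)
  -- the exceptional set is null
  have hatl : ∀ p : Fin n × Fin n, ¬(p.1 = p.2 ∧ p.1 ≠ z) → ∀ x : ℝ, x ≠ 0 → μ p.1 p.2 {x} = 0 := by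
    rintro ⟨i, j⟩ hvar x hx
    by_cases hij : i = j
    · have hiz : i = z := not_not.1 fun hiz => hvar ⟨hij, hiz⟩
      exact hatomless i j (Or.inr ⟨hiz, hij ▸ hiz⟩) x hx
    · exact hatomless i j (Or.inl hij) x hx
  have hbad_incl : (D ∩ G) \ Pz ⊆ ⋃ (S : Finset (Fin n × Fin n)) (_ : PS z S ≠ 0),
      (fun (x : Fin n → Fin n → ℝ) (p : Fin n × Fin n) => x p.1 p.2) ⁻¹'
        {w : Fin n × Fin n → ℝ | MvPolynomial.eval w (PS z S) = 0
          ∧ ∀ p ∈ (PS z S).vars, w p ≠ 0} := by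
    rintro x ⟨⟨hdet, hGx⟩, hper⟩
    set S : Finset (Fin n × Fin n) :=
      Finset.univ.filter (fun p : Fin n × Fin n => ¬(p.1 = p.2 ∧ p.1 ≠ z) ∧ x p.1 p.2 = 0)
      with hSdef
    have hS0 : ∀ p ∈ S, x p.1 p.2 = 0 := fun p hp => (Finset.mem_filter.1 hp).2.2
    have hper' : ∃ σ : Equiv.Perm (Fin n), ∀ i, x (σ i) i ≠ 0 := by
      by_contra hcon
      push_neg at hcon
      exact hper ((per_eq_zero_iff x).2 hcon)
    obtain ⟨σ₀, hσ₀⟩ := hper'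
    have hd0 : ∀ p ∈ (dmon z σ₀).support, p ∉ S := by
      intro p hp hpS
      rw [dmon_support] at hp
      apply hσ₀ p.2
      rw [hp.2]
      exact hS0 p hpS
    have hPSne : PS z S ≠ 0 := PS_ne_zero z S σ₀ hd0
    refine Set.mem_iUnion.2 ⟨S, Set.mem_iUnion.2 ⟨hPSne, ?_, ?_⟩⟩
    · show MvPolynomial.eval (fun p : Fin n × Fin n => x p.1 p.2) (PS z S) = 0
      rw [eval_PS z S _ (fun p hp => hS0 p hp), eval_Pdet z x hGx]
      exact hdet
    · intro p hp h0
      obtain ⟨hvar, hnS⟩ := PS_vars z S p hp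
      exact hnS (Finset.mem_filter.2 ⟨Finset.mem_univ _, hvar, h0⟩)
  have hbad : M ((D ∩ G) \ Pz) = 0 := by
    refine measure_mono_null hbad_incl (measure_iUnion_null fun S => measure_iUnion_null fun hS => ?_)
    rw [hM, (mp_uncurry n μ).measure_preimage (eventSet_measurable (PS z S)).nullMeasurableSet]
    exact lemMgen _ (PS z S) hS (fun p hp => hatl p (PS_vars z S p hp).1)
  -- assembly
  have hDsub : D ⊆ ((D ∩ G) \ Pz) ∪ Pz ∪ Gᶜ := by
    intro x hx
    by_cases hg : x ∈ G
    · by_cases hpz : x ∈ Pz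
      · exact Or.inl (Or.inr hpz)
      · exact Or.inl (Or.inl ⟨⟨hx, hg⟩, hpz⟩)
    · exact Or.inr hg
  have h1 : M D ≤ M Pz := by
    calc M D ≤ M (((D ∩ G) \ Pz) ∪ Pz ∪ Gᶜ) := measure_mono hDsub
    _ ≤ M (((D ∩ G) \ Pz) ∪ Pz) + M Gᶜ := measure_union_le _ _
    _ = M (((D ∩ G) \ Pz) ∪ Pz) := by rw [hGc, add_zero]
    _ ≤ M ((D ∩ G) \ Pz) + M Pz := measure_union_le _ _
    _ = M Pz := by rw [hbad, zero_add]
  exact le_antisymm h1 (measure_mono hPD)
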